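/- Let p, q, m be integers with 2 ≤ p < q and p + 1 < m < 2p − 1. Then the set 𝒮 has maximum (pq + q − 2p)/(q(q−1)) and minimum (p−1)/(q−1); that is, both values lie in 𝒮, and every element x of 𝒮 satisfies (p−1)/(q−1) ≤ x ≤ (pq + q − 2p)/(q(q−1)). -/

import Mathlib

/-- The set `𝒜` of integer sequences `(a_k)_{k≥1}` (indexed here by `k : ℕ`, so `a k`
stands for `a_{k+1}`) with `|a_k| ≤ m - 1` and `∑_{k≥1} a_k p^{-k} = 1`. -/
def seqA (p m : ℤ) : Set (ℕ → ℤ) :=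
  {a | (∀ k, |a k| ≤ m - 1) ∧ HasSum (fun k => (a k : ℝ) * ((p : ℝ)⁻¹) ^ (k + 1)) 1}

/-- The set `ℬ` of integer sequences `(b_k)_{k≥1}` with `|b_k| ≤ m - 1` and
`∑_{k≥1} b_k p^{-k} = 0`. -/
def seqB (p m : ℤ) : Set (ℕ → ℤ) :=
  {b | (∀ k, |b k| ≤ m - 1) ∧ HasSum (fun k => (b k : ℝ) * ((p : ℝ)⁻¹) ^ (k + 1)) 0}

/-- `𝒮 = { ∑_{k≥1} a_k q^{-k} : (a_k) ∈ 𝒜 }`. -/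
def setS (p q m : ℤ) : Set ℝ :=
  {x | ∃ a ∈ seqA p m, HasSum (fun k => (a k : ℝ) * ((q : ℝ)⁻¹) ^ (k + 1)) x}

/-- `𝒮' = { ∑_{k≥1} k a_k p^{-k} : (a_k) ∈ 𝒜 }`. -/
def setS' (p m : ℤ) : Set ℝ :=
  {x | ∃ a ∈ seqA p m,
    HasSum (fun k => ((k + 1 : ℕ) : ℝ) * (a k : ℝ) * ((p : ℝ)⁻¹) ^ (k + 1)) x}

/-- `𝒬 = { ∑_{k≥1} b_k q^{-k} : (b_k) ∈ ℬ }`. -/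
def setQ (p q m : ℤ) : Set ℝ :=
  {x | ∃ b ∈ seqB p m, HasSum (fun k => (b k : ℝ) * ((q : ℝ)⁻¹) ^ (k + 1)) x}

/-- `𝒬' = { ∑_{k≥1} k b_k p^{-k} : (b_k) ∈ ℬ }`. -/
def setQ' (p m : ℤ) : Set ℝ :=
  {x | ∃ b ∈ seqB p m,
    HasSum (fun k => ((k + 1 : ℕ) : ℝ) * (b k : ℝ) * ((p : ℝ)⁻¹) ^ (k + 1)) x}

open Finset

private lemma geom_shift {s : ℝ} (h0 : 0 ≤ s) (h1 : s < 1) (c : ℝ) :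
    HasSum (fun k : ℕ => c * s ^ (k + 1)) (c * s / (1 - s)) := by
  have h := (hasSum_geometric_of_lt_one h0 h1).mul_left (c * s)
  have he : (fun k : ℕ => c * s * s ^ k) = fun k : ℕ => c * s ^ (k + 1) := by
    funext k; ring
  rw [he] at h
  rw [div_eq_mul_inv]
  exact h

private lemma key_lemma (p q : ℤ) (hp : 2 ≤ p) (hpq : p < q) (c : ℕ → ℤ)
    (hb : ∀ k, 1 ≤ k → c k ≤ p - 2)
    (h0 : HasSum (fun k => (c k : ℝ) * ((p : ℝ)⁻¹) ^ (k + 1)) 0)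
    {y : ℝ} (hy : HasSum (fun k => (c k : ℝ) * ((q : ℝ)⁻¹) ^ (k + 1)) y) :
    0 ≤ y := by
  have hpR : (2 : ℝ) ≤ (p : ℝ) := by exact_mod_cast hp
  have hp0 : (0 : ℝ) < (p : ℝ) := by linarith
  have hqR : (p : ℝ) < (q : ℝ) := by exact_mod_cast hpq
  have hq0 : (0 : ℝ) < (q : ℝ) := by linarith
  set r : ℝ := (p : ℝ)⁻¹ with hr_def
  have hr0 : 0 < r := inv_pos.2 hp0
  have hr1 : r < 1 := by
    rw [hr_def, inv_lt_one_iff₀]; right; linarith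
  have hrp : r * (p : ℝ) = 1 := inv_mul_cancel₀ (ne_of_gt hp0)
  set f : ℕ → ℝ := fun k => (c k : ℝ) * r ^ (k + 1) with hf_def
  have hsf : Summable f := h0.summable
  set t : ℕ → ℝ := fun n => ∑' k, f (k + n) with ht_def
  have ht_eq : ∀ n, (∑ k ∈ range n, f k) + t n = 0 := by
    intro n
    rw [ht_def]
    simp only []
    rw [hsf.sum_add_tsum_nat_add n]; exact h0.tsum_eq
  have ht0 : t 0 = 0 := by have := ht_eq 0; simpa using this
  -- integrality
  have hz : ∀ n, ∃ z : ℤ, (z : ℝ) = t n * (p : ℝ) ^ n := by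
    intro n
    refine ⟨-∑ k ∈ range n, c k * p ^ (n - (k + 1)), ?_⟩
    have htn : t n = -∑ k ∈ range n, f k := by linarith [ht_eq n]
    rw [htn]
    push_cast
    rw [neg_mul, Finset.sum_mul]
    congr 1
    refine Finset.sum_congr rfl fun k hk => ?_
    have hk' : k + 1 ≤ n := mem_range.1 hk
    have hpow : (p : ℝ) ^ n = (p : ℝ) ^ (k + 1) * (p : ℝ) ^ (n - (k + 1)) := by
      rw [← pow_add]; congr 1; omega
    rw [hf_def]
    simp only []
    rw [hpow, hr_def, inv_pow]
    field_simp
  -- tail bound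
  have ht_le : ∀ n, t n ≤ 0 := by
    intro n
    match n with
    | 0 => exact le_of_eq ht0
    | Nat.succ n =>
      set N := n + 1 with hN
      have hsum_tail : Summable fun k => f (k + N) := by
        exact (summable_nat_add_iff N).2 hsf
      have hgeo : HasSum (fun k : ℕ => ((p : ℝ) - 2) * r ^ N * r ^ (k + 1))
          (((p : ℝ) - 2) * r ^ N * r / (1 - r)) := geom_shift hr0.le hr1 _
      have hle : t N ≤ ((p : ℝ) - 2) * r ^ N * r / (1 - r) := by
        rw [ht_def]
        simp only []
        rw [← hgeo.tsum_eq]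
        refine Summable.tsum_le_tsum ?_ hsum_tail hgeo.summable
        intro k
        rw [hf_def]
        simp only []
        have h1 : (c (k + N) : ℝ) ≤ (p : ℝ) - 2 := by
          have := hb (k + N) (by omega); exact_mod_cast this
        have h2 : (0:ℝ) ≤ r ^ (k + N + 1) := (pow_pos hr0 _).le
        calc (c (k + N) : ℝ) * r ^ (k + N + 1)
            ≤ ((p : ℝ) - 2) * r ^ (k + N + 1) := mul_le_mul_of_nonneg_right h1 h2
          _ = ((p : ℝ) - 2) * r ^ N * r ^ (k + 1) := by ring
      have hlt : t N < r ^ N := by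
        have h1r : (0:ℝ) < 1 - r := by linarith
        have : ((p : ℝ) - 2) * r ^ N * r / (1 - r) < r ^ N := by
          rw [div_lt_iff₀ h1r]
          nlinarith [pow_pos hr0 N, mul_pos (pow_pos hr0 N) hr0]
        linarith
      obtain ⟨z, hzeq⟩ := hz N
      have hrp_pow : r ^ N * (p : ℝ) ^ N = 1 := by
        rw [← mul_pow, hrp, one_pow]
      have hz1 : (z : ℝ) < 1 := by
        rw [hzeq]
        calc t N * (p:ℝ) ^ N < r ^ N * (p:ℝ) ^ N :=
              mul_lt_mul_of_pos_right hlt (pow_pos hp0 N)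
          _ = 1 := hrp_pow
      have hz0 : z ≤ 0 := by
        have : z < 1 := by exact_mod_cast hz1
        omega
      have hz0R : (z : ℝ) ≤ 0 := by exact_mod_cast hz0
      nlinarith [pow_pos hp0 N, hzeq.symm.trans_le hz0R]
  -- main telescoping argument
  set ρ : ℝ := (p : ℝ) / (q : ℝ) with hρ_def
  have hρ0 : 0 ≤ ρ := by positivity
  have hρ1 : ρ < 1 := (div_lt_one hq0).2 hqR
  set g : ℕ → ℝ := fun k => (c k : ℝ) * ((q : ℝ)⁻¹) ^ (k + 1) with hg_def
  set S : ℕ → ℝ := fun n => ∑ k ∈ range n, g k with hS_def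
  set T : ℕ → ℝ := fun n => S n + t n * ρ ^ n with hT_def
  have hrρ : r * ρ = (q : ℝ)⁻¹ := by
    rw [hr_def, hρ_def]; field_simp
  have hstep : ∀ n, T (n + 1) = T n - t n * ρ ^ n * (1 - ρ) := by
    intro n
    have hSn : S (n + 1) = S n + g n := by
      rw [hS_def]; simp only []; rw [Finset.sum_range_succ]
    have htn : t (n + 1) = t n - f n := by
      have e1 := ht_eq n
      have e2 := ht_eq (n + 1)
      rw [Finset.sum_range_succ] at e2
      linarith
    have hfg : f n * ρ ^ (n + 1) = g n := by
      rw [hf_def, hg_def]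
      simp only []
      rw [← hrρ, mul_pow]
      ring
    rw [hT_def]
    simp only []
    rw [hSn, htn]
    have : ρ ^ (n + 1) = ρ ^ n * ρ := pow_succ ρ n
    linear_combination (t n) * this - hfg
  have hT0 : T 0 = 0 := by
    rw [hT_def, hS_def]
    simp [ht0]
  have hTnn : ∀ n, 0 ≤ T n := by
    intro n
    induction n with
    | zero => exact le_of_eq hT0.symm
    | succ n ih =>
      rw [hstep n]
      have h1 : t n ≤ 0 := ht_le n
      have h2 : (0:ℝ) ≤ ρ ^ n := pow_nonneg hρ0 n
      have h3 : t n * ρ ^ n ≤ 0 := mul_nonpos_of_nonpos_of_nonneg h1 h2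
      have h4 : t n * ρ ^ n * (1 - ρ) ≤ 0 :=
        mul_nonpos_of_nonpos_of_nonneg h3 (by linarith)
      linarith
  have hSnn : ∀ n, 0 ≤ S n := by
    intro n
    have h1 := hTnn n
    have h2 : t n ≤ 0 := ht_le n
    have h3 : (0:ℝ) ≤ ρ ^ n := pow_nonneg hρ0 n
    rw [hT_def] at h1
    simp only [] at h1
    have h4 : t n * ρ ^ n ≤ 0 := mul_nonpos_of_nonpos_of_nonneg h2 h3
    linarith
  exact ge_of_tendsto' hy.tendsto_sum_nat hSnn

private lemma hasSum_ifseq (p : ℤ) {s : ℝ} (h0 : 0 ≤ s) (h1 : s < 1) :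
    HasSum (fun k : ℕ => ((if k = 0 then p + 1 else 1 - p : ℤ) : ℝ) * s ^ (k + 1))
      ((1 - (p : ℝ)) * s / (1 - s) + 2 * (p : ℝ) * s) := by
  have g1 := geom_shift h0 h1 (1 - (p : ℝ))
  have g2 : HasSum (fun k : ℕ => if k = 0 then 2 * (p : ℝ) * s else 0) (2 * (p : ℝ) * s) :=
    hasSum_ite_eq 0 _
  have g3 := g1.add g2
  have he : (fun k : ℕ => (1 - (p : ℝ)) * s ^ (k + 1) + if k = 0 then 2 * (p : ℝ) * s else 0)
      = fun k : ℕ => ((if k = 0 then p + 1 else 1 - p : ℤ) : ℝ) * s ^ (k + 1) := by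
    funext k
    rcases k with _ | k
    · rw [if_pos rfl, if_pos rfl]; push_cast; ring
    · rw [if_neg (Nat.succ_ne_zero k), if_neg (Nat.succ_ne_zero k)]; push_cast; ring
  rw [he] at g3; exact g3

theorem stmt_4 (p q m : ℤ) (hp : 2 ≤ p) (hpq : p < q)
    (hm1 : p + 1 < m) (hm2 : m < 2 * p - 1) :
    ((p : ℝ) * q + q - 2 * p) / ((q : ℝ) * ((q : ℝ) - 1)) ∈ setS p q m ∧
    ((p : ℝ) - 1) / ((q : ℝ) - 1) ∈ setS p q m ∧
    ∀ x ∈ setS p q m,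
      ((p : ℝ) - 1) / ((q : ℝ) - 1) ≤ x ∧
      x ≤ ((p : ℝ) * q + q - 2 * p) / ((q : ℝ) * ((q : ℝ) - 1)) := by
  have hpR : (2 : ℝ) ≤ (p : ℝ) := by exact_mod_cast hp
  have hqZ : 3 ≤ q := by omega
  have hqR : (3 : ℝ) ≤ (q : ℝ) := by exact_mod_cast hqZ
  have hp0 : (0 : ℝ) < (p : ℝ) := by linarith
  have hq0 : (0 : ℝ) < (q : ℝ) := by linarith
  have hpne : (p : ℝ) ≠ 0 := ne_of_gt hp0
  have hqne : (q : ℝ) ≠ 0 := ne_of_gt hq0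
  have hpm1 : (p : ℝ) - 1 ≠ 0 := by intro h; nlinarith
  have hqm1 : (q : ℝ) - 1 ≠ 0 := by intro h; nlinarith
  have hrp0 : (0 : ℝ) ≤ (p : ℝ)⁻¹ := by positivity
  have hrp1 : (p : ℝ)⁻¹ < 1 := by rw [inv_lt_one_iff₀]; right; linarith
  have hrq0 : (0 : ℝ) ≤ (q : ℝ)⁻¹ := by positivity
  have hrq1 : (q : ℝ)⁻¹ < 1 := by rw [inv_lt_one_iff₀]; right; linarith
  have cast1 : ((p - 1 : ℤ) : ℝ) = (p : ℝ) - 1 := by push_cast; ring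
  -- constant sequence HasSums
  have hminp : HasSum (fun k : ℕ => ((p - 1 : ℤ) : ℝ) * ((p : ℝ)⁻¹) ^ (k + 1)) 1 := by
    have h := geom_shift hrp0 hrp1 ((p : ℝ) - 1)
    have hv : ((p : ℝ) - 1) * (p : ℝ)⁻¹ / (1 - (p : ℝ)⁻¹) = 1 := by
      field_simp
    rw [hv] at h
    simpa only [cast1] using h
  have hminq : HasSum (fun k : ℕ => ((p - 1 : ℤ) : ℝ) * ((q : ℝ)⁻¹) ^ (k + 1))
      (((p : ℝ) - 1) / ((q : ℝ) - 1)) := by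
    have h := geom_shift hrq0 hrq1 ((p : ℝ) - 1)
    have h1q : 1 - (q : ℝ)⁻¹ ≠ 0 := ne_of_gt (by linarith)
    have hv : ((p : ℝ) - 1) * (q : ℝ)⁻¹ / (1 - (q : ℝ)⁻¹) = ((p : ℝ) - 1) / ((q : ℝ) - 1) := by
      field_simp
    rw [hv] at h
    simpa only [cast1] using h
  -- `amax` HasSums
  have hmaxp : HasSum (fun k : ℕ =>
      ((if k = 0 then p + 1 else 1 - p : ℤ) : ℝ) * ((p : ℝ)⁻¹) ^ (k + 1)) 1 := by
    have h := hasSum_ifseq p hrp0 hrp1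
    have hv : (1 - (p : ℝ)) * (p : ℝ)⁻¹ / (1 - (p : ℝ)⁻¹) + 2 * (p : ℝ) * (p : ℝ)⁻¹ = 1 := by
      field_simp
      ring
    rw [hv] at h; exact h
  have hmaxq : HasSum (fun k : ℕ =>
      ((if k = 0 then p + 1 else 1 - p : ℤ) : ℝ) * ((q : ℝ)⁻¹) ^ (k + 1))
      (((p : ℝ) * q + q - 2 * p) / ((q : ℝ) * ((q : ℝ) - 1))) := by
    have h := hasSum_ifseq p hrq0 hrq1
    have hv : (1 - (p : ℝ)) * (q : ℝ)⁻¹ / (1 - (q : ℝ)⁻¹) + 2 * (p : ℝ) * (q : ℝ)⁻¹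
        = ((p : ℝ) * q + q - 2 * p) / ((q : ℝ) * ((q : ℝ) - 1)) := by
      have h1q : 1 - (q : ℝ)⁻¹ ≠ 0 := ne_of_gt (by linarith)
      field_simp
      ring
    rw [hv] at h; exact h
  refine ⟨?_, ?_, ?_⟩
  · exact ⟨fun k => if k = 0 then p + 1 else 1 - p,
      ⟨fun k => by rcases k with _ | k <;> rw [abs_le] <;> simp <;> omega, hmaxp⟩, hmaxq⟩
  · exact ⟨fun _ => p - 1,
      ⟨fun k => by rw [abs_le]; constructor <;> simp <;> omega, hminp⟩, hminq⟩
  · rintro x ⟨a, ⟨habs, hap⟩, hax⟩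
    have habs' : ∀ k, -(m - 1) ≤ a k ∧ a k ≤ m - 1 := fun k => abs_le.1 (habs k)
    constructor
    · -- lower bound
      have hcp : HasSum (fun k => ((a k - (p - 1) : ℤ) : ℝ) * ((p : ℝ)⁻¹) ^ (k + 1)) 0 := by
        have he : (fun k : ℕ => ((a k - (p - 1) : ℤ) : ℝ) * ((p : ℝ)⁻¹) ^ (k + 1))
            = fun k : ℕ => (a k : ℝ) * ((p : ℝ)⁻¹) ^ (k + 1)
                - ((p - 1 : ℤ) : ℝ) * ((p : ℝ)⁻¹) ^ (k + 1) := by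
          funext k; push_cast; ring
        rw [he]
        simpa using hap.sub hminp
      have hcq : HasSum (fun k => ((a k - (p - 1) : ℤ) : ℝ) * ((q : ℝ)⁻¹) ^ (k + 1))
          (x - ((p : ℝ) - 1) / ((q : ℝ) - 1)) := by
        have he : (fun k : ℕ => ((a k - (p - 1) : ℤ) : ℝ) * ((q : ℝ)⁻¹) ^ (k + 1))
            = fun k : ℕ => (a k : ℝ) * ((q : ℝ)⁻¹) ^ (k + 1)
                - ((p - 1 : ℤ) : ℝ) * ((q : ℝ)⁻¹) ^ (k + 1) := by
          funext k; push_cast; ring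
        rw [he]
        exact hax.sub hminq
      have hkey := key_lemma p q hp hpq (fun k => a k - (p - 1))
        (fun k _ => by have := habs' k; show a k - (p - 1) ≤ p - 2; omega) hcp hcq
      linarith
    · -- upper bound
      have hcp : HasSum (fun k =>
          (((if k = 0 then p + 1 else 1 - p) - a k : ℤ) : ℝ) * ((p : ℝ)⁻¹) ^ (k + 1)) 0 := by
        have he : (fun k : ℕ =>
            (((if k = 0 then p + 1 else 1 - p) - a k : ℤ) : ℝ) * ((p : ℝ)⁻¹) ^ (k + 1))
            = fun k : ℕ => ((if k = 0 then p + 1 else 1 - p : ℤ) : ℝ) * ((p : ℝ)⁻¹) ^ (k + 1)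
                - (a k : ℝ) * ((p : ℝ)⁻¹) ^ (k + 1) := by
          funext k; push_cast; ring
        rw [he]
        simpa using hmaxp.sub hap
      have hcq : HasSum (fun k =>
          (((if k = 0 then p + 1 else 1 - p) - a k : ℤ) : ℝ) * ((q : ℝ)⁻¹) ^ (k + 1))
          (((p : ℝ) * q + q - 2 * p) / ((q : ℝ) * ((q : ℝ) - 1)) - x) := by
        have he : (fun k : ℕ =>
            (((if k = 0 then p + 1 else 1 - p) - a k : ℤ) : ℝ) * ((q : ℝ)⁻¹) ^ (k + 1))
            = fun k : ℕ => ((if k = 0 then p + 1 else 1 - p : ℤ) : ℝ) * ((q : ℝ)⁻¹) ^ (k + 1)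
                - (a k : ℝ) * ((q : ℝ)⁻¹) ^ (k + 1) := by
          funext k; push_cast; ring
        rw [he]
        exact hmaxq.sub hax
      have hkey := key_lemma p q hp hpq (fun k => (if k = 0 then p + 1 else 1 - p) - a k)
        (fun k hk => by
          have := habs' k
          show (if k = 0 then p + 1 else 1 - p) - a k ≤ p - 2
          rw [if_neg (by omega : ¬ k = 0)]
          omega) hcp hcq
      linarith
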